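/- Let q be a prime power with p = char(F_q) ∉ {2,3}, and let a be a primitive third root of unity in the algebraic closure of F_q. If A ∈ F_{q³} \ F_q satisfies N(A) = 1 and N(A+1) = −1 (where N is the norm from F_{q³} to F_q), then neither aA nor a⁻¹A satisfies both N(X) = 1 and N(X+1) = −1. -/
import Mathlib

open Polynomial

/-- Elements of `L` fixed by `x ↦ x ^ q` lie in the image of `K` when `card K = q`. -/
lemma aux_fixed {K L : Type} [Field K] [Fintype K] [Field L] [Algebra K L]
    {q : ℕ} (hK : Fintype.card K = q) (x : L) (hx : x ^ q = x) :
    x ∈ Set.range (algebraMap K L) := by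
  classical
  by_contra hxr
  have hq2 : 2 ≤ q := hK ▸ Fintype.one_lt_card
  set P : L[X] := X ^ q - X with hP
  have hdeg : P.natDegree = q := by
    rw [hP]
    have h1 : (X : L[X]).natDegree < ((X : L[X]) ^ q).natDegree := by
      simp only [natDegree_X, natDegree_X_pow]; omega
    rw [natDegree_sub_eq_left_of_natDegree_lt h1, natDegree_X_pow]
  have hP0 : P ≠ 0 := by
    intro h
    rw [h, natDegree_zero] at hdeg
    omega
  have hroot : ∀ y : L, y ^ q = y → y ∈ P.roots.toFinset := by
    intro y hy
    rw [Multiset.mem_toFinset, mem_roots hP0]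
    simp [Polynomial.IsRoot, hP, hy]
  set S : Finset L := Finset.univ.image (algebraMap K L) with hS
  have hSsub : S ⊆ P.roots.toFinset := by
    intro y hy
    rw [hS, Finset.mem_image] at hy
    obtain ⟨c, -, rfl⟩ := hy
    apply hroot
    rw [← map_pow]
    congr 1
    have := FiniteField.pow_card c
    rwa [hK] at this
  have hxS : x ∉ S := by
    intro hxs
    apply hxr
    rw [hS, Finset.mem_image] at hxs
    obtain ⟨c, -, rfl⟩ := hxs
    exact ⟨c, rfl⟩
  have hcard : q + 1 ≤ P.roots.toFinset.card := by
    have hins : insert x S ⊆ P.roots.toFinset := by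
      intro y hy
      rcases Finset.mem_insert.mp hy with rfl | hy
      · exact hroot _ hx
      · exact hSsub hy
    have hc : (insert x S).card = q + 1 := by
      rw [Finset.card_insert_of_notMem hxS, hS,
        Finset.card_image_of_injective _ (algebraMap K L).injective, Finset.card_univ, hK]
    calc q + 1 = (insert x S).card := hc.symm
      _ ≤ _ := Finset.card_le_card hins
  have hle := (Multiset.toFinset_card_le P.roots).trans P.card_roots'
  omega

/-- Purely algebraic core computation. -/
lemma aux_core {L : Type} [Field L] (A B C b : L)
    (hABC : A * B * C = 1) (hb3 : b ^ 3 = 1) (hb1 : b ≠ 1)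
    (e1 : (A + 1) * (B + 1) * (C + 1) = -1)
    (e2 : (b * A + 1) * (b * B + 1) * (b * C + 1) = -1) :
    (A - b) * (B - b) * (C - b) = 0 := by
  have hω : b ^ 2 + b + 1 = 0 := by
    have h := mul_eq_zero.mp (show (b - 1) * (b ^ 2 + b + 1) = 0 by linear_combination hb3)
    exact h.resolve_left (sub_ne_zero_of_ne hb1)
  have hse : (A + B + C) + (A * B + A * C + B * C) = -3 := by
    linear_combination e1 - hABC
  have hse2 : b * (A + B + C) + b ^ 2 * (A * B + A * C + B * C) = -3 := by
    linear_combination e2 - b ^ 3 * hABC - hb3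
  have h4 : (b - 1) * (b * (A * B + A * C + B * C) - 3) = 0 := by
    linear_combination hse2 - b * hse
  have hbe : b * (A * B + A * C + B * C) = 3 := by
    rcases mul_eq_zero.mp h4 with h | h
    · exact absurd (sub_eq_zero.mp h) hb1
    · exact sub_eq_zero.mp h
  linear_combination hABC - hb3 + b ^ 2 * hse - (b + 1) * hbe - 3 * hω

/-- The main field-theoretic lemma in `L`. -/
lemma core_L (p k q : ℕ) (hp : Nat.Prime p) (hq : q = p ^ k)
    (K L : Type) [Field K] [Fintype K] [Field L] [Fintype L] [Algebra K L]
    (hK : Fintype.card K = q) (hL : Fintype.card L = q ^ 3)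
    (A b : L) (hA : A ∉ Set.range (algebraMap K L))
    (hb : b ∈ Set.range (algebraMap K L)) (hb3 : b ^ 3 = 1) (hb1 : b ≠ 1)
    (h1 : A ^ (q ^ 2 + q + 1) = 1) (h2 : (A + 1) ^ (q ^ 2 + q + 1) = -1) :
    (b * A + 1) ^ (q ^ 2 + q + 1) ≠ -1 := by
  intro hcon
  haveI : Fact p.Prime := ⟨hp⟩
  haveI hcharL : CharP L p := by
    have h0 : ((q ^ 3 : ℕ) : L) = 0 := by rw [← hL]; exact FiniteField.cast_card_eq_zero L
    have hdvd : ringChar L ∣ q ^ 3 := ringChar.dvd h0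
    have hprime : (ringChar L).Prime := CharP.char_is_prime L (ringChar L)
    have hdp : ringChar L ∣ p := by
      rw [hq, ← pow_mul] at hdvd
      exact hprime.dvd_of_dvd_pow hdvd
    have heq : ringChar L = p := (Nat.prime_dvd_prime_iff_eq hprime hp).mp hdp
    exact heq ▸ ringChar.charP L
  have hfrob : ∀ x y : L, (x + y) ^ q = x ^ q + y ^ q := by
    intro x y; rw [hq]; exact add_pow_char_pow x y p k
  have hpow : ∀ x : L, x ^ (q ^ 2 + q + 1) = x ^ (q ^ 2) * x ^ q * x := by
    intro x; rw [pow_add, pow_add, pow_one]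
  set B := A ^ q with hB
  set C := A ^ (q ^ 2) with hC
  have hqq : q * q = q ^ 2 := (sq q).symm
  have hq3 : q ^ 2 * q = q ^ 3 := by ring
  have hBq : B ^ q = C := by rw [hB, hC, ← pow_mul, hqq]
  have hCq : C ^ q = A := by
    rw [hC, ← pow_mul, hq3, ← hL]
    exact FiniteField.pow_card A
  have hbq : b ^ q = b := by
    obtain ⟨c, rfl⟩ := hb
    rw [← map_pow]
    congr 1
    have := FiniteField.pow_card c
    rwa [hK] at this
  have hABC : A * B * C = 1 := by
    have h := h1
    rw [hpow A] at h
    linear_combination h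
  have hA1q : (A + 1) ^ q = B + 1 := by rw [hfrob, one_pow, hB]
  have hA1q2 : (A + 1) ^ (q ^ 2) = C + 1 := by
    rw [← hqq, pow_mul, hA1q, hfrob, one_pow, hBq]
  have e1 : (A + 1) * (B + 1) * (C + 1) = -1 := by
    have h := h2
    rw [hpow (A + 1), hA1q, hA1q2] at h
    linear_combination h
  have hbA1q : (b * A + 1) ^ q = b * B + 1 := by rw [hfrob, one_pow, mul_pow, hbq, hB]
  have hbA1q2 : (b * A + 1) ^ (q ^ 2) = b * C + 1 := by
    rw [← hqq, pow_mul, hbA1q, hfrob, one_pow, mul_pow, hbq, hBq]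
  have e2 : (b * A + 1) * (b * B + 1) * (b * C + 1) = -1 := by
    have h := hcon
    rw [hpow (b * A + 1), hbA1q, hbA1q2] at h
    linear_combination h
  have hzero := aux_core A B C b hABC hb3 hb1 e1 e2
  have hAb : A = b := by
    rcases mul_eq_zero.mp hzero with h | h
    · rcases mul_eq_zero.mp h with h | h
      · exact sub_eq_zero.mp h
      · -- B = b
        have hBb : B = b := sub_eq_zero.mp h
        have hCb : C = b := by rw [← hBq, hBb, hbq]
        rw [← hCq, hCb, hbq]
    · -- C = b
      have hCb : C = b := sub_eq_zero.mp h
      rw [← hCq, hCb, hbq]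
  exact hA (hAb ▸ hb)

/-- Transfer a non-membership statement from `L` to `Ω`. -/
lemma aux_reduce {L Ω : Type} [Field L] [Field Ω] [Algebra L Ω] (n : ℕ) (A bb : L) (x : Ω)
    (hx : x = algebraMap L Ω bb) (hne : (bb * A + 1) ^ n ≠ -1) :
    ¬ ((x * algebraMap L Ω A) ^ n = 1 ∧ (x * algebraMap L Ω A + 1) ^ n = -1) := by
  rintro ⟨-, hc⟩
  apply hne
  apply (algebraMap L Ω).injective
  rw [map_pow, map_neg, map_one, map_add, map_mul, map_one, ← hx]
  exact hc

/-- If `A ∈ S₄(1,−1) \ F_q` and `a` is a primitive third root of unity, then neither `aA`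
nor `a⁻¹A` satisfies both `N(X) = 1` and `N(X+1) = −1`. -/
theorem stmt_14 (p k q : ℕ) (hp : Nat.Prime p) (hk : 0 < k) (hq : q = p ^ k)
    (hp2 : p ≠ 2) (hp3 : p ≠ 3)
    (K L : Type) [Field K] [Fintype K] [Field L] [Fintype L] [Algebra K L]
    (hK : Fintype.card K = q) (hL : Fintype.card L = q ^ 3)
    (Ω : Type) [Field Ω] [IsAlgClosed Ω] [Algebra L Ω]
    (a : Ω) (ha3 : a ^ 3 = 1) (ha1 : a ≠ 1)
    (A : L) (hA : A ∉ Set.range (algebraMap K L))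
    (h1 : A ^ (q ^ 2 + q + 1) = 1) (h2 : (A + 1) ^ (q ^ 2 + q + 1) = -1) :
    ¬ ((a * algebraMap L Ω A) ^ (q ^ 2 + q + 1) = 1 ∧
        (a * algebraMap L Ω A + 1) ^ (q ^ 2 + q + 1) = -1) ∧
    ¬ ((a⁻¹ * algebraMap L Ω A) ^ (q ^ 2 + q + 1) = 1 ∧
        (a⁻¹ * algebraMap L Ω A + 1) ^ (q ^ 2 + q + 1) = -1) := by
  have hAn : (algebraMap L Ω A) ^ (q ^ 2 + q + 1) = 1 := by
    rw [← map_pow, h1, map_one]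
  have hq1 : 1 ≤ q := by
    rw [hq]; exact Nat.one_le_pow _ _ hp.pos
  have hmod : q % 3 = 1 ∨ q % 3 = 2 := by
    have h3 : ¬ (3 ∣ q) := by
      intro h3
      rw [hq] at h3
      have hdp := Nat.Prime.dvd_of_dvd_pow Nat.prime_three h3
      exact hp3 ((Nat.prime_dvd_prime_iff_eq Nat.prime_three hp).mp hdp).symm
    omega
  have hainv : a⁻¹ = a ^ 2 := inv_eq_of_mul_eq_one_right (by linear_combination ha3)
  rcases hmod with hmod | hmod
  · -- q ≡ 1 (mod 3)
    obtain ⟨t, ht⟩ : ∃ t, q = 3 * t + 1 := ⟨q / 3, by omega⟩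
    have hn3 : q ^ 2 + q + 1 = 3 * (3 * t ^ 2 + 3 * t + 1) := by rw [ht]; ring
    -- find a cube root of unity in K
    haveI : Fact (Nat.Prime 3) := ⟨Nat.prime_three⟩
    classical
    have h3card : (3 : ℕ) ∣ Fintype.card Kˣ := by
      rw [Fintype.card_units, hK]; omega
    obtain ⟨g, hg⟩ := exists_prime_orderOf_dvd_card 3 h3card
    have hc3 : (g : K) ^ 3 = 1 := by
      have hgo : g ^ 3 = 1 := by rw [← hg]; exact pow_orderOf_eq_one g
      rw [← Units.val_pow_eq_pow_val, hgo, Units.val_one]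
    have hc1 : (g : K) ≠ 1 := by
      intro h
      have hgone : g = 1 := Units.ext (by rw [Units.val_one]; exact h)
      rw [hgone, orderOf_one] at hg
      omega
    set b : L := algebraMap K L (g : K) with hbdef
    have hbL3 : b ^ 3 = 1 := by rw [hbdef, ← map_pow, hc3, map_one]
    have hbL1 : b ≠ 1 := by
      intro h
      apply hc1
      apply (algebraMap K L).injective
      rw [← hbdef, h, map_one]
    have hb2L3 : (b ^ 2) ^ 3 = 1 := by rw [← pow_mul, mul_comm, pow_mul, hbL3, one_pow]
    have hb2L1 : b ^ 2 ≠ 1 := by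
      intro h
      apply hbL1
      calc b = b * b ^ 2 := by rw [h, mul_one]
        _ = b ^ 3 := by ring
        _ = 1 := hbL3
    have hbmem : b ∈ Set.range (algebraMap K L) := ⟨(g : K), rfl⟩
    have hb2mem : b ^ 2 ∈ Set.range (algebraMap K L) := ⟨(g : K) ^ 2, map_pow _ _ 2⟩
    -- a is the image of b or of b^2
    set β : Ω := algebraMap L Ω b with hβdef
    have hβ3 : β ^ 3 = 1 := by rw [hβdef, ← map_pow, hbL3, map_one]
    have hβ1 : β ≠ 1 := by
      intro h
      apply hbL1
      apply (algebraMap L Ω).injective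
      rw [← hβdef, h, map_one]
    have hωa : a ^ 2 + a + 1 = 0 := by
      have h := mul_eq_zero.mp (show (a - 1) * (a ^ 2 + a + 1) = 0 by linear_combination ha3)
      exact h.resolve_left (sub_ne_zero_of_ne ha1)
    have hωβ : β ^ 2 + β + 1 = 0 := by
      have h := mul_eq_zero.mp (show (β - 1) * (β ^ 2 + β + 1) = 0 by linear_combination hβ3)
      exact h.resolve_left (sub_ne_zero_of_ne hβ1)
    have key : (a - β) * (a - β ^ 2) = 0 := by
      linear_combination hωa - a * hωβ + hβ3
    have hne1 : (b * A + 1) ^ (q ^ 2 + q + 1) ≠ -1 :=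
      core_L p k q hp hq K L hK hL A b hA hbmem hbL3 hbL1 h1 h2
    have hne2 : (b ^ 2 * A + 1) ^ (q ^ 2 + q + 1) ≠ -1 :=
      core_L p k q hp hq K L hK hL A (b ^ 2) hA hb2mem hb2L3 hb2L1 h1 h2
    rcases mul_eq_zero.mp key with h | h
    · -- a = β
      have haβ : a = algebraMap L Ω b := sub_eq_zero.mp h
      have hainv2 : a⁻¹ = algebraMap L Ω (b ^ 2) := by
        rw [map_pow, hainv, haβ]
      exact ⟨aux_reduce _ A b a haβ hne1, aux_reduce _ A (b ^ 2) a⁻¹ hainv2 hne2⟩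
    · -- a = β^2
      have haβ2 : a = β ^ 2 := sub_eq_zero.mp h
      have haβ : a = algebraMap L Ω (b ^ 2) := by rw [map_pow, haβ2, hβdef]
      have hainv2 : a⁻¹ = algebraMap L Ω b := by
        rw [hainv, haβ2, ← hβdef]
        calc (β ^ 2) ^ 2 = β * β ^ 3 := by ring
          _ = β := by rw [hβ3, mul_one]
      exact ⟨aux_reduce _ A (b ^ 2) a haβ hne2, aux_reduce _ A b a⁻¹ hainv2 hne1⟩
  · -- q ≡ 2 (mod 3)
    obtain ⟨t, ht⟩ : ∃ t, q = 3 * t + 2 := ⟨q / 3, by omega⟩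
    have hn1 : q ^ 2 + q + 1 = 3 * (3 * t ^ 2 + 5 * t + 2) + 1 := by rw [ht]; ring
    have han : a ^ (q ^ 2 + q + 1) = a := by
      rw [hn1, pow_add, pow_mul, ha3, one_pow, one_mul, pow_one]
    constructor
    · rintro ⟨hc1, -⟩
      rw [mul_pow, han, hAn, mul_one] at hc1
      exact ha1 hc1
    · rintro ⟨hc1, -⟩
      rw [mul_pow, inv_pow, han, hAn, mul_one] at hc1
      exact ha1 (inv_eq_one.mp hc1)
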